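/- If K is a (q, k, λ)-difference set, then the cyclotomic matrix A satisfies A^T A = λk J + (k-λ) I - k E_{0,0}, where J is the ℓ×ℓ all-ones matrix, I the identity, E_{0,0} the matrix with a 1 in the (0,0)-entry and zeros elsewhere, and λ = (k-1)/ℓ. -/

import Mathlib

set_option linter.unusedSectionVars false


open Matrix

/-- Cyclotomic number `(i, j)` with respect to generator `g` and divisor `ℓ`. -/
noncomputable def cyc {F : Type*} [Field F] [Fintype F] (g : Fˣ) (ℓ : ℕ) (i j : ℤ) : ℕ :=
  Nat.card {x : F // (∃ y : Fˣ, x = 1 + ((g ^ i * y ^ ℓ : Fˣ) : F)) ∧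
    ∃ z : Fˣ, x = ((g ^ j * z ^ ℓ : Fˣ) : F)}

/-- The cyclotomic matrix `A = [(i,j)]`, with integer entries. -/
noncomputable def cycMatrix {F : Type*} [Field F] [Fintype F] (g : Fˣ) (ℓ : ℕ) :
    Matrix (Fin ℓ) (Fin ℓ) ℤ :=
  Matrix.of fun i j => (cyc g ℓ ((i : ℕ) : ℤ) ((j : ℕ) : ℤ) : ℤ)

/-- The set of `ℓ`-th powers in `Fˣ`, viewed inside `F`. -/
def Kset (F : Type*) [Field F] (ℓ : ℕ) : Set F :=
  {x : F | ∃ y : Fˣ, x = ((y ^ ℓ : Fˣ) : F)}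

/-- `H` is a difference set of `(F, +)` with parameter `lam`. -/
def IsDiffSet {F : Type*} [Field F] (H : Set F) (lam : ℕ) : Prop :=
  ∀ z : F, z ≠ 0 →
    Nat.card {p : F × F // p.1 ∈ H ∧ p.2 ∈ H ∧ p.1 - p.2 = z} = lam

open Finset

section Aux
open scoped Classical

variable {F : Type*} [Field F] [Fintype F] (g : Fˣ) (ℓ : ℕ)

/-- membership in the coset `g^a K` inside `Fˣ`. -/
def inC (a : ℤ) (u : Fˣ) : Prop := ∃ y : Fˣ, u = g ^ a * y ^ ℓ

/-- membership in the coset `g^a K` inside `F`. -/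
def inCF (a : ℤ) (x : F) : Prop := ∃ y : Fˣ, x = ((g ^ a * y ^ ℓ : Fˣ) : F)

lemma inCF_iff {a : ℤ} {x : F} :
    inCF g ℓ a x ↔ ∃ u : Fˣ, (u : F) = x ∧ inC g ℓ a u := by
  constructor
  · rintro ⟨y, rfl⟩; exact ⟨g ^ a * y ^ ℓ, rfl, y, rfl⟩
  · rintro ⟨u, hu, y, rfl⟩; exact ⟨y, hu.symm⟩

lemma pow_aux (t : ℤ) (y : Fˣ) : (g ^ t * y) ^ ℓ = g ^ ((ℓ : ℤ) * t) * y ^ ℓ := by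
  rw [mul_pow, ← zpow_natCast (g ^ t) ℓ, ← _root_.zpow_mul, mul_comm t (ℓ:ℤ)]

lemma inC_congr {a b : ℤ} (h : (ℓ : ℤ) ∣ a - b) {u : Fˣ} :
    inC g ℓ a u ↔ inC g ℓ b u := by
  obtain ⟨t, ht⟩ := h
  have hab : a = b + (ℓ:ℤ) * t := by linarith
  constructor
  · rintro ⟨y, rfl⟩
    refine ⟨g ^ t * y, ?_⟩
    rw [pow_aux, ← mul_assoc, ← _root_.zpow_add, ← hab]
  · rintro ⟨y, rfl⟩
    refine ⟨g ^ (-t) * y, ?_⟩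
    rw [pow_aux, ← mul_assoc, ← _root_.zpow_add, hab]
    ring_nf

end Aux

section Aux2
open scoped Classical

variable {F : Type*} [Field F] [Fintype F] {g : Fˣ} {ℓ : ℕ}

lemma exists_rep (hg : ∀ x : Fˣ, x ∈ Subgroup.zpowers g) (u : Fˣ) : ∃ z : ℤ, u = g ^ z := by
  obtain ⟨z, hz⟩ := Subgroup.mem_zpowers_iff.mp (hg u); exact ⟨z, hz.symm⟩

lemma ppow_iff (hg : ∀ x : Fˣ, x ∈ Subgroup.zpowers g) (hℓ : ℓ ∣ Fintype.card F - 1)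
    (m : ℤ) : (∃ y : Fˣ, g ^ m = y ^ ℓ) ↔ (ℓ : ℤ) ∣ m := by
  classical
  have hord : orderOf g = Fintype.card F - 1 := by
    rw [orderOf_eq_card_of_forall_mem_zpowers hg, Nat.card_eq_fintype_card,
      Fintype.card_units]
  constructor
  · rintro ⟨y, hy⟩
    obtain ⟨z, rfl⟩ := exists_rep hg y
    rw [← _root_.zpow_natCast (g ^ z) ℓ, ← _root_.zpow_mul] at hy
    have h1 : g ^ (m - z * ℓ) = 1 := by
      rw [_root_.zpow_sub, hy]; group
    have h2 : ((Fintype.card F - 1 : ℕ) : ℤ) ∣ m - z * ℓ := by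
      rw [← hord]; exact orderOf_dvd_iff_zpow_eq_one.mpr h1
    have h3 : (ℓ : ℤ) ∣ m - z * ℓ := dvd_trans (Int.natCast_dvd_natCast.mpr hℓ) h2
    have h4 : (ℓ : ℤ) ∣ z * ℓ := dvd_mul_left _ _
    have h5 : (ℓ : ℤ) ∣ (m - z * ℓ) + z * ℓ := dvd_add h3 h4
    simpa using h5
  · rintro ⟨t, rfl⟩
    exact ⟨g ^ t, by rw [← _root_.zpow_natCast (g ^ t) ℓ, ← _root_.zpow_mul, mul_comm]⟩

lemma inC_dvd_of_both (hg : ∀ x : Fˣ, x ∈ Subgroup.zpowers g)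
    (hℓ : ℓ ∣ Fintype.card F - 1) {a b : ℤ} {u : Fˣ}
    (h1 : inC g ℓ a u) (h2 : inC g ℓ b u) : (ℓ : ℤ) ∣ a - b := by
  obtain ⟨y, hy⟩ := h1; obtain ⟨y', hy'⟩ := h2
  have hh : g ^ a * y ^ ℓ = g ^ b * y' ^ ℓ := by rw [← hy, ← hy']
  have hh' : (g : F) ^ a * (y : F) ^ ℓ = (g : F) ^ b * (y' : F) ^ ℓ := by
    have := congrArg (Units.val) hh
    push_cast at this
    exact this
  have key : g ^ (b - a) = (y / y') ^ ℓ := by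
    apply Units.ext
    push_cast
    rw [zpow_sub₀ (Units.ne_zero g), div_pow,
      div_eq_div_iff (zpow_ne_zero _ (Units.ne_zero g)) (pow_ne_zero _ (Units.ne_zero y'))]
    linear_combination - hh'
  have hba := (ppow_iff hg hℓ (b - a)).mp ⟨y / y', key⟩
  exact dvd_sub_comm.mp hba

lemma inC_one_iff (hg : ∀ x : Fˣ, x ∈ Subgroup.zpowers g)
    (hℓ : ℓ ∣ Fintype.card F - 1) {a : ℤ} : inC g ℓ a 1 ↔ (ℓ : ℤ) ∣ a := by
  constructor
  · rintro ⟨y, hy⟩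
    have h1 : (g : F) ^ a * (y : F) ^ ℓ = 1 := by
      have := congrArg (Units.val) hy.symm
      push_cast at this
      simpa using this
    have key : g ^ (-a) = y ^ ℓ := by
      apply Units.ext
      push_cast
      rw [_root_.zpow_neg]
      exact inv_eq_of_mul_eq_one_right h1
    have hna := (ppow_iff hg hℓ (-a)).mp ⟨y, key⟩
    exact dvd_neg.mp hna
  · intro h
    have heq : inC g ℓ a 1 ↔ inC g ℓ 0 1 := inC_congr g ℓ (by simpa using h)
    rw [heq]
    exact ⟨1, by simp⟩

lemma inC_exists [NeZero ℓ] (hg : ∀ x : Fˣ, x ∈ Subgroup.zpowers g) (u : Fˣ) :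
    ∃ s : Fin ℓ, inC g ℓ ((s : ℕ) : ℤ) u := by
  obtain ⟨z, rfl⟩ := exists_rep hg u
  have hℓpos : 0 < (ℓ : ℤ) := by exact_mod_cast Nat.pos_of_ne_zero (NeZero.ne ℓ)
  have h1 : 0 ≤ z % ℓ := Int.emod_nonneg z (by positivity)
  have h2 : z % ℓ < ℓ := Int.emod_lt_of_pos z hℓpos
  refine ⟨⟨(z % ℓ).toNat, by omega⟩, ?_⟩
  have hcast : (((⟨(z % ℓ).toNat, by omega⟩ : Fin ℓ) : ℕ) : ℤ) = z % ℓ := by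
    simp [Int.toNat_of_nonneg h1]
  rw [hcast]
  have hdvd : (ℓ : ℤ) ∣ z - z % ℓ := by
    have heq : z - z % ℓ = ℓ * (z / ℓ) := by rw [Int.emod_def]; ring
    exact heq ▸ dvd_mul_right _ _
  obtain ⟨t, ht⟩ := hdvd
  refine ⟨g ^ t, ?_⟩
  rw [← _root_.zpow_natCast (g ^ t) ℓ, ← _root_.zpow_mul, ← _root_.zpow_add]
  congr 1
  linarith

lemma inC_unique [NeZero ℓ] (hg : ∀ x : Fˣ, x ∈ Subgroup.zpowers g)
    (hℓ : ℓ ∣ Fintype.card F - 1) {u : Fˣ} {s s' : Fin ℓ}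
    (h1 : inC g ℓ ((s : ℕ) : ℤ) u) (h2 : inC g ℓ ((s' : ℕ) : ℤ) u) : s = s' := by
  have hd := inC_dvd_of_both hg hℓ h1 h2
  have hs := s.isLt; have hs' := s'.isLt
  have h0 : ((s : ℕ) : ℤ) - ((s' : ℕ) : ℤ) = 0 := by
    refine Int.eq_zero_of_abs_lt_dvd hd ?_
    rw [abs_lt]
    omega
  ext; omega

noncomputable def idx [NeZero ℓ] (hg : ∀ x : Fˣ, x ∈ Subgroup.zpowers g) (u : Fˣ) :
    Fin ℓ := Classical.choose (inC_exists hg u)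

lemma idx_spec [NeZero ℓ] (hg : ∀ x : Fˣ, x ∈ Subgroup.zpowers g) (u : Fˣ) :
    inC g ℓ ((idx (ℓ := ℓ) hg u : ℕ) : ℤ) u := Classical.choose_spec (inC_exists hg u)

lemma idx_eq_iff [NeZero ℓ] (hg : ∀ x : Fˣ, x ∈ Subgroup.zpowers g)
    (hℓ : ℓ ∣ Fintype.card F - 1) {u : Fˣ} {s : Fin ℓ} :
    idx (ℓ := ℓ) hg u = s ↔ inC g ℓ ((s : ℕ) : ℤ) u := by
  constructor
  · rintro rfl; exact idx_spec hg u
  · intro h; exact inC_unique hg hℓ (idx_spec hg u) h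

noncomputable def idxF [NeZero ℓ] (hg : ∀ x : Fˣ, x ∈ Subgroup.zpowers g) (x : F) :
    Fin ℓ := if h : x = 0 then 0 else idx (ℓ := ℓ) hg (Units.mk0 x h)

lemma inCF_ne_zero {a : ℤ} {x : F} (h : inCF g ℓ a x) : x ≠ 0 := by
  obtain ⟨y, hy⟩ := h; rw [hy]; exact Units.ne_zero _

lemma idxF_eq_iff [NeZero ℓ] (hg : ∀ x : Fˣ, x ∈ Subgroup.zpowers g)
    (hℓ : ℓ ∣ Fintype.card F - 1) {x : F} (hx : x ≠ 0) {s : Fin ℓ} :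
    idxF (ℓ := ℓ) hg x = s ↔ inCF g ℓ ((s : ℕ) : ℤ) x := by
  rw [idxF, dif_neg hx, idx_eq_iff hg hℓ, inCF_iff]
  constructor
  · intro h; exact ⟨Units.mk0 x hx, rfl, h⟩
  · rintro ⟨u, hu, h⟩
    have heq : u = Units.mk0 x hx := Units.ext (by simp [hu])
    rwa [heq] at h

end Aux2

section Aux3
open scoped Classical

variable {F : Type*} [Field F] [Fintype F] {g : Fˣ} {ℓ : ℕ}

lemma inC_mul_iff {a : ℤ} {c w : Fˣ} (hc : ∃ y : Fˣ, c = y ^ ℓ) :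
    inC g ℓ a (c * w) ↔ inC g ℓ a w := by
  obtain ⟨y, rfl⟩ := hc
  constructor
  · rintro ⟨z, hz⟩
    refine ⟨y⁻¹ * z, ?_⟩
    have : w = (y ^ ℓ)⁻¹ * (y ^ ℓ * w) := by group
    rw [this, hz, mul_pow, inv_pow]
    simp [mul_comm, mul_left_comm, mul_assoc]
  · rintro ⟨z, rfl⟩
    exact ⟨y * z, by rw [mul_pow]; simp [mul_comm, mul_left_comm, mul_assoc]⟩

lemma card_filter_inC (hg : ∀ x : Fˣ, x ∈ Subgroup.zpowers g)
    (hℓ : ℓ ∣ Fintype.card F - 1) (a : ℤ) :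
    (univ.filter (inC g ℓ a)).card = (Fintype.card F - 1) / ℓ := by
  classical
  have hord : orderOf g = Fintype.card F - 1 := by
    rw [orderOf_eq_card_of_forall_mem_zpowers hg, Nat.card_eq_fintype_card,
      Fintype.card_units]
  -- first : card of K itself
  have hK : (univ.filter (inC g ℓ 0)).card = (Fintype.card F - 1) / ℓ := by
    have hiff : ∀ u : Fˣ, inC g ℓ 0 u ↔ u ∈ Subgroup.zpowers (g ^ ℓ) := by
      intro u
      constructor
      · rintro ⟨y, rfl⟩
        obtain ⟨z, rfl⟩ := exists_rep hg y
        refine ⟨z, ?_⟩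
        show (g ^ ℓ) ^ z = _
        rw [← _root_.zpow_natCast g ℓ, ← _root_.zpow_mul, _root_.zpow_zero, one_mul,
          ← _root_.zpow_natCast (g ^ z) ℓ, ← _root_.zpow_mul, mul_comm]
      · rintro ⟨z, hz⟩
        refine ⟨g ^ z, ?_⟩
        rw [_root_.zpow_zero, one_mul, ← hz]
        show (g ^ ℓ) ^ z = (g ^ z) ^ ℓ
        rw [← _root_.zpow_natCast g ℓ, ← _root_.zpow_mul,
          ← _root_.zpow_natCast (g ^ z) ℓ, ← _root_.zpow_mul, mul_comm]
    have hset : univ.filter (inC g ℓ 0)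
        = univ.filter (fun u : Fˣ => u ∈ Subgroup.zpowers (g ^ ℓ)) := by
      ext u
      simp only [Finset.mem_filter, Finset.mem_univ, true_and]
      exact hiff u
    rw [hset]
    have h2 : (univ.filter (fun u : Fˣ => u ∈ Subgroup.zpowers (g ^ ℓ))).card
        = Nat.card (Subgroup.zpowers (g ^ ℓ)) := by
      rw [Nat.card_eq_fintype_card]
      rw [← Fintype.card_subtype]
    rw [h2, Nat.card_zpowers, orderOf_pow, hord, Nat.gcd_eq_right hℓ]
  -- coset has the same size
  have himg : univ.filter (inC g ℓ a)
      = Finset.image (fun u => g ^ a * u) (univ.filter (inC g ℓ 0)) := by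
    ext u
    simp only [Finset.mem_filter, Finset.mem_image, Finset.mem_univ, true_and]
    constructor
    · rintro ⟨y, rfl⟩
      exact ⟨y ^ ℓ, ⟨y, by rw [_root_.zpow_zero, one_mul]⟩, rfl⟩
    · rintro ⟨v, ⟨y, rfl⟩, rfl⟩
      exact ⟨y, by rw [_root_.zpow_zero, one_mul]⟩
  rw [himg, Finset.card_image_of_injective _ (mul_right_injective _)]
  exact hK

lemma card_filter_inCF (hg : ∀ x : Fˣ, x ∈ Subgroup.zpowers g)
    (hℓ : ℓ ∣ Fintype.card F - 1) (a : ℤ) :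
    ((univ : Finset F).filter (inCF g ℓ a)).card = (Fintype.card F - 1) / ℓ := by
  classical
  have himg : (univ : Finset F).filter (inCF g ℓ a)
      = Finset.image (Units.val) (univ.filter (inC g ℓ a)) := by
    ext x
    simp only [Finset.mem_filter, Finset.mem_image, Finset.mem_univ, true_and]
    rw [inCF_iff]
    constructor
    · rintro ⟨u, hu, h⟩; exact ⟨u, h, hu⟩
    · rintro ⟨u, h, hu⟩; exact ⟨u, hu, h⟩
  rw [himg, Finset.card_image_of_injective _ Units.val_injective]
  exact card_filter_inC hg hℓ a

end Aux3

section Main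
open scoped Classical

variable {F : Type*} [Field F] [Fintype F] (g : Fˣ) (ℓ : ℕ)

lemma quot_pow (c y₁ y₂ : Fˣ) : (c * y₁ ^ ℓ) * (c * y₂ ^ ℓ)⁻¹ = (y₁ * y₂⁻¹) ^ ℓ := by
  rw [mul_pow, inv_pow, mul_inv, mul_mul_mul_comm]
  simp

/-- pairs `(a, u)` with `a ∈ g^s K`, `u ∈ g^i K`, `u = 1 + a`. -/
noncomputable def Aset (s i : ℤ) : Finset (Fˣ × Fˣ) :=
  univ.filter fun p => inC g ℓ s p.1 ∧ inC g ℓ i p.2 ∧ ((p.2 : F) = 1 + (p.1 : F))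

lemma cyc_eq_Aset (s i : ℤ) : cyc g ℓ s i = (Aset g ℓ s i).card := by
  classical
  rw [cyc, Nat.card_eq_fintype_card, Fintype.card_subtype]
  symm
  apply Finset.card_bij (i := fun (p : Fˣ × Fˣ) _ => ((p.2 : F)))
  · rintro ⟨a, u⟩ hp
    simp only [Aset, Finset.mem_filter, Finset.mem_univ, true_and] at hp ⊢
    obtain ⟨⟨y, hy⟩, ⟨z, hz⟩, hval⟩ := hp
    constructor
    · exact ⟨y, by rw [hval, hy]⟩
    · exact ⟨z, by rw [hz]⟩
  · rintro ⟨a, u⟩ hp ⟨a', u'⟩ hp' h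
    simp only [Aset, Finset.mem_filter, Finset.mem_univ, true_and] at hp hp'
    have hu : u = u' := Units.ext h
    have ha : a = a' := by
      apply Units.ext
      have h1 := hp.2.2
      have h2 := hp'.2.2
      rw [hu] at h1
      rw [h1] at h2
      exact add_left_cancel h2
    rw [hu, ha]
  · intro x hx
    simp only [Finset.mem_filter, Finset.mem_univ, true_and] at hx
    obtain ⟨⟨y, hy⟩, ⟨z, hz⟩⟩ := hx
    have hx0 : x ≠ 0 := by rw [hz]; exact Units.ne_zero _
    have hx1 : x - 1 ≠ 0 := by
      rw [hy]; simpa using Units.ne_zero (g ^ s * y ^ ℓ)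
    refine ⟨(Units.mk0 (x - 1) hx1, Units.mk0 x hx0), ?_, rfl⟩
    simp only [Aset, Finset.mem_filter, Finset.mem_univ, true_and]
    refine ⟨⟨y, Units.ext ?_⟩, ⟨z, Units.ext ?_⟩, ?_⟩
    · rw [Units.val_mk0, hy]; ring
    · rw [Units.val_mk0, hz]
    · simp

/-- triples `(u, w, m)` with `u ∈ g^i K`, `w ∈ g^j K`, `m ∈ K`,
`u - 1 = m (w - 1)`, `u ≠ 1`. -/
noncomputable def Quad (i j : ℤ) : Finset (Fˣ × Fˣ × Fˣ) :=
  univ.filter fun t => inC g ℓ i t.1 ∧ inC g ℓ j t.2.1 ∧ (∃ y : Fˣ, t.2.2 = y ^ ℓ) ∧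
    ((t.1 : F) - 1 = (t.2.2 : F) * ((t.2.1 : F) - 1)) ∧ (t.1 : F) ≠ 1

lemma step1 [NeZero ℓ] (hg : ∀ x : Fˣ, x ∈ Subgroup.zpowers g)
    (hℓ : ℓ ∣ Fintype.card F - 1) (i j : ℤ) :
    ∑ s : Fin ℓ, cyc g ℓ ((s : ℕ) : ℤ) i * cyc g ℓ ((s : ℕ) : ℤ) j
      = (Quad g ℓ i j).card := by
  classical
  have hmap : ∀ t ∈ Quad g ℓ i j,
      idxF (ℓ := ℓ) hg ((t.2.1 : F) - 1) ∈ (univ : Finset (Fin ℓ)) :=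
    fun _ _ => Finset.mem_univ _
  rw [Finset.card_eq_sum_card_fiberwise hmap]
  refine Finset.sum_congr rfl fun s _ => ?_
  rw [cyc_eq_Aset, cyc_eq_Aset, ← Finset.card_product]
  apply Finset.card_bij (i := fun (p : (Fˣ × Fˣ) × (Fˣ × Fˣ)) _ =>
    (p.1.2, p.2.2, p.1.1 * p.2.1⁻¹))
  · rintro ⟨⟨a, u⟩, ⟨b, w⟩⟩ hp
    simp only [Finset.mem_product, Aset, Finset.mem_filter, Finset.mem_univ, true_and] at hp
    obtain ⟨⟨hsa, hiu, hval1⟩, ⟨hsb, hjw, hval2⟩⟩ := hp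
    have hav : (a : F) = (u : F) - 1 := by rw [hval1]; ring
    have hbv : (b : F) = (w : F) - 1 := by rw [hval2]; ring
    simp only [Quad, Finset.mem_filter, Finset.mem_univ, true_and]
    refine ⟨⟨hiu, hjw, ?_, ?_, ?_⟩, ?_⟩
    · obtain ⟨y₁, rfl⟩ := hsa
      obtain ⟨y₂, rfl⟩ := hsb
      exact ⟨y₁ * y₂⁻¹, quot_pow ℓ _ _ _⟩
    · push_cast
      rw [← hav, ← hbv]
      field_simp
    · intro h1
      apply Units.ne_zero a
      rw [hav, h1]; ring
    · rw [idxF_eq_iff hg hℓ (by rw [← hbv]; exact Units.ne_zero b)]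
      rw [inCF_iff]
      exact ⟨b, hbv, hsb⟩
  · rintro ⟨⟨a, u⟩, ⟨b, w⟩⟩ hp ⟨⟨a', u'⟩, ⟨b', w'⟩⟩ hp' h
    simp only [Finset.mem_product, Aset, Finset.mem_filter, Finset.mem_univ, true_and] at hp hp'
    simp only [Prod.mk.injEq] at h
    obtain ⟨hu, hw, -⟩ := h
    have ha : a = a' := by
      apply Units.ext
      have h1 : (a : F) = (u : F) - 1 := by rw [hp.1.2.2]; ring
      have h2 : (a' : F) = (u' : F) - 1 := by rw [hp'.1.2.2]; ring
      rw [h1, h2, hu]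
    have hb : b = b' := by
      apply Units.ext
      have h1 : (b : F) = (w : F) - 1 := by rw [hp.2.2.2]; ring
      have h2 : (b' : F) = (w' : F) - 1 := by rw [hp'.2.2.2]; ring
      rw [h1, h2, hw]
    simp [ha, hb, hu, hw]
  · rintro ⟨u, w, m⟩ ht
    simp only [Quad, Finset.mem_filter, Finset.mem_univ, true_and] at ht
    obtain ⟨⟨hiu, hjw, ⟨y, hy⟩, hrel, hu1⟩, hidx⟩ := ht
    have hw1 : (w : F) - 1 ≠ 0 := by
      intro h0
      apply hu1
      have h00 : (u : F) - 1 = 0 := by rw [hrel, h0]; ring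
      exact sub_eq_zero.mp h00
    have hb0 := hw1
    set b : Fˣ := Units.mk0 ((w : F) - 1) hw1 with hbdef
    have hsb : inC g ℓ ((s : ℕ) : ℤ) b := by
      have h2 := (idxF_eq_iff hg hℓ hw1).mp hidx
      rw [inCF_iff] at h2
      obtain ⟨u', hu', h⟩ := h2
      have : u' = b := Units.ext (by rw [hu']; rfl)
      rwa [this] at h
    have hu0 : (u : F) - 1 ≠ 0 := sub_ne_zero.mpr hu1
    set a : Fˣ := Units.mk0 ((u : F) - 1) hu0 with hadef
    have hab : a = m * b := by
      apply Units.ext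
      push_cast
      rw [hadef, hbdef]
      simp only [Units.val_mk0]
      exact hrel
    have hsa : inC g ℓ ((s : ℕ) : ℤ) a := by
      rw [hab]
      exact (inC_mul_iff ⟨y, hy⟩).mpr hsb
    refine ⟨((a, u), (b, w)), ?_, ?_⟩
    · simp only [Finset.mem_product, Aset, Finset.mem_filter, Finset.mem_univ, true_and]
      refine ⟨⟨hsa, hiu, ?_⟩, ⟨hsb, hjw, ?_⟩⟩
      · simp only [hadef, Units.val_mk0]; ring
      · simp only [hbdef, Units.val_mk0]; ring
    · have hm : a * b⁻¹ = m := by rw [hab]; group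
      simp [hm]

end Main

section Main2
open scoped Classical

variable {F : Type*} [Field F] [Fintype F] (g : Fˣ) (ℓ : ℕ)

/-- nontrivial `ℓ`-th powers -/
noncomputable def Mset : Finset Fˣ :=
  univ.filter fun m => (∃ y : Fˣ, m = y ^ ℓ) ∧ m ≠ 1

noncomputable def Q2p (i j : ℤ) : Finset (Fˣ × Fˣ × Fˣ) :=
  univ.filter fun t => inC g ℓ i t.1 ∧ inC g ℓ j t.2.1 ∧ (∃ y : Fˣ, t.2.2 = y ^ ℓ) ∧
    t.2.2 ≠ 1 ∧ ((t.1 : F) - 1 = (t.2.2 : F) * ((t.2.1 : F) - 1))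

noncomputable def Rset (i j : ℤ) : Finset (Fˣ × Fˣ × Fˣ) :=
  univ.filter fun t => inC g ℓ i t.1 ∧ inC g ℓ j t.2.1 ∧ (∃ y : Fˣ, t.2.2 = y ^ ℓ) ∧
    t.2.2 ≠ 1 ∧ ((t.1 : F) - (t.2.1 : F) = 1 - (t.2.2 : F))

noncomputable def Npairs (i j : ℤ) (d : F) : Finset (Fˣ × Fˣ) :=
  univ.filter fun p => inC g ℓ i p.1 ∧ inC g ℓ j p.2 ∧ ((p.1 : F) - (p.2 : F) = d)

lemma step2 (i j : ℤ) :
    (Quad g ℓ i j).card = ((Quad g ℓ i j).filter (fun t => t.2.2 = 1)).card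
      + ((Quad g ℓ i j).filter (fun t => ¬ t.2.2 = 1)).card :=
  (Finset.card_filter_add_card_filter_not _).symm

lemma quad1_card (hg : ∀ x : Fˣ, x ∈ Subgroup.zpowers g)
    (hℓ : ℓ ∣ Fintype.card F - 1) (i j : ℤ) :
    ((Quad g ℓ i j).filter (fun t => t.2.2 = 1)).card
      + (if (ℓ:ℤ) ∣ i ∧ (ℓ:ℤ) ∣ j then 1 else 0)
    = (if (ℓ:ℤ) ∣ i - j then (Fintype.card F - 1) / ℓ else 0) := by
  classical
  have hD : ((Quad g ℓ i j).filter (fun t => t.2.2 = 1)).card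
      = (univ.filter (fun u : Fˣ => inC g ℓ i u ∧ inC g ℓ j u ∧ (u : F) ≠ 1)).card := by
    apply Finset.card_bij (i := fun (t : Fˣ × Fˣ × Fˣ) _ => t.1)
    · rintro ⟨u, w, m⟩ ht
      simp only [Quad, Finset.mem_filter, Finset.mem_univ, true_and] at ht
      obtain ⟨⟨hiu, hjw, -, hrel, hu1⟩, hm1⟩ := ht
      subst hm1
      have hwu : w = u := by
        apply Units.ext
        have : (u : F) - 1 = (w : F) - 1 := by rw [hrel]; push_cast; ring
        linear_combination - this
      subst hwu
      simp only [Finset.mem_filter, Finset.mem_univ, true_and]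
      exact ⟨hiu, hjw, hu1⟩
    · rintro ⟨u, w, m⟩ ht ⟨u', w', m'⟩ ht' h
      simp only [Quad, Finset.mem_filter, Finset.mem_univ, true_and] at ht ht'
      obtain ⟨⟨-, -, -, hrel, -⟩, hm1⟩ := ht
      obtain ⟨⟨-, -, -, hrel', -⟩, hm1'⟩ := ht'
      subst hm1; subst hm1'
      simp only at h
      subst h
      have hw : w = w' := by
        apply Units.ext
        have e1 : (u : F) - 1 = (w : F) - 1 := by rw [hrel]; push_cast; ring
        have e2 : (u : F) - 1 = (w' : F) - 1 := by rw [hrel']; push_cast; ring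
        linear_combination e2 - e1
      rw [hw]
    · intro u hu
      simp only [Finset.mem_filter, Finset.mem_univ, true_and] at hu
      refine ⟨(u, u, 1), ?_, rfl⟩
      simp only [Quad, Finset.mem_filter, Finset.mem_univ, true_and]
      exact ⟨⟨hu.1, hu.2.1, ⟨1, (one_pow ℓ).symm⟩, by push_cast; ring, hu.2.2⟩, by trivial⟩
  rw [hD]
  by_cases hij : (ℓ:ℤ) ∣ i - j
  · rw [if_pos hij]
    have hjiff : ∀ u : Fˣ, inC g ℓ j u ↔ inC g ℓ i u :=
      fun u => inC_congr g ℓ (dvd_sub_comm.mp hij)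
    have hset : univ.filter (fun u : Fˣ => inC g ℓ i u ∧ inC g ℓ j u ∧ (u : F) ≠ 1)
        = (univ.filter (inC g ℓ i)).filter (fun u : Fˣ => ¬ (u : F) = 1) := by
      rw [Finset.filter_filter]
      ext u
      simp only [Finset.mem_filter, Finset.mem_univ, true_and]
      rw [hjiff u]
      tauto
    rw [hset]
    have hsplit := Finset.card_filter_add_card_filter_not
      (s := univ.filter (inC g ℓ i)) (p := fun u : Fˣ => (u : F) = 1)
    rw [card_filter_inC hg hℓ] at hsplit
    have hone : ((univ.filter (inC g ℓ i)).filter (fun u : Fˣ => (u : F) = 1)).card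
        = (if (ℓ:ℤ) ∣ i ∧ (ℓ:ℤ) ∣ j then 1 else 0) := by
      have hii : ((ℓ:ℤ) ∣ i ∧ (ℓ:ℤ) ∣ j) ↔ (ℓ:ℤ) ∣ i := by
        constructor
        · exact fun h => h.1
        · intro h; exact ⟨h, by simpa using dvd_sub h hij⟩
      rw [if_congr hii rfl rfl]
      by_cases hi : (ℓ:ℤ) ∣ i
      · rw [if_pos hi]
        have : (univ.filter (inC g ℓ i)).filter (fun u : Fˣ => (u : F) = 1) = {1} := by
          ext u
          simp only [Finset.mem_filter, Finset.mem_univ, true_and, Finset.mem_singleton]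
          constructor
          · rintro ⟨-, h1⟩; exact Units.ext (by rw [Units.val_one]; exact h1)
          · rintro rfl; exact ⟨(inC_one_iff hg hℓ).mpr hi, rfl⟩
        rw [this, Finset.card_singleton]
      · rw [if_neg hi]
        rw [Finset.card_eq_zero]
        ext u
        simp only [Finset.mem_filter, Finset.mem_univ, true_and, Finset.notMem_empty,
          iff_false, not_and]
        intro hu h1
        have hu1 : u = 1 := Units.ext (by rw [Units.val_one]; exact h1)
        exact hi ((inC_one_iff hg hℓ).mp (hu1 ▸ hu))
    rw [← hone, add_comm]
    exact hsplit
  · rw [if_neg hij]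
    have h00 : ¬ ((ℓ:ℤ) ∣ i ∧ (ℓ:ℤ) ∣ j) := by
      rintro ⟨h1, h2⟩; exact hij (dvd_sub h1 h2)
    rw [if_neg h00]
    have : univ.filter (fun u : Fˣ => inC g ℓ i u ∧ inC g ℓ j u ∧ (u : F) ≠ 1) = ∅ := by
      ext u
      simp only [Finset.mem_filter, Finset.mem_univ, true_and, Finset.notMem_empty, iff_false,
        not_and]
      intro h1 h2
      exact absurd (inC_dvd_of_both hg hℓ h1 h2) hij
    rw [this]
    simp

lemma quad2_card (hg : ∀ x : Fˣ, x ∈ Subgroup.zpowers g)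
    (hℓ : ℓ ∣ Fintype.card F - 1) (i j : ℤ) :
    ((Quad g ℓ i j).filter (fun t => ¬ t.2.2 = 1)).card
      + (if (ℓ:ℤ) ∣ i ∧ (ℓ:ℤ) ∣ j then (Mset (F := F) ℓ).card else 0)
    = (Q2p g ℓ i j).card := by
  classical
  have h1 : (Quad g ℓ i j).filter (fun t => ¬ t.2.2 = 1)
      = (Q2p g ℓ i j).filter (fun t => ¬ (t.1 : F) = 1) := by
    simp only [Quad, Q2p, Finset.filter_filter]
    ext t
    simp only [Finset.mem_filter, Finset.mem_univ, true_and]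
    tauto
  have hsplit := Finset.card_filter_add_card_filter_not
    (s := Q2p g ℓ i j) (p := fun t : Fˣ × Fˣ × Fˣ => (t.1 : F) = 1)
  have h2 : ((Q2p g ℓ i j).filter (fun t => (t.1 : F) = 1)).card
      = (if (ℓ:ℤ) ∣ i ∧ (ℓ:ℤ) ∣ j then (Mset (F := F) ℓ).card else 0) := by
    by_cases h00 : (ℓ:ℤ) ∣ i ∧ (ℓ:ℤ) ∣ j
    · rw [if_pos h00]
      have himg : (Q2p g ℓ i j).filter (fun t => (t.1 : F) = 1)
          = Finset.image (fun m : Fˣ => ((1 : Fˣ), (1 : Fˣ), m)) (Mset ℓ) := by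
        ext t
        obtain ⟨u, w, m⟩ := t
        simp only [Q2p, Finset.filter_filter, Finset.mem_filter, Finset.mem_univ, true_and,
          Finset.mem_image, Mset]
        constructor
        · rintro ⟨⟨hiu, hjw, hy, hm1, hrel⟩, hu1⟩
          have hu : u = 1 := Units.ext (by rw [Units.val_one]; exact hu1)
          have hw : w = 1 := by
            apply Units.ext
            have hm0 : (m : F) ≠ 0 := Units.ne_zero _
            have e1 : (m : F) * ((w : F) - 1) = 0 := by rw [← hrel, hu1]; ring
            have e2 := (mul_eq_zero.mp e1).resolve_left hm0
            have e3 := sub_eq_zero.mp e2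
            rw [Units.val_one]; exact e3
          exact ⟨m, ⟨hy, hm1⟩, by rw [hu, hw]⟩
        · rintro ⟨m, ⟨hy, hm1⟩, heq⟩
          simp only [Prod.mk.injEq] at heq
          obtain ⟨e1, e2, e3⟩ := heq
          subst e1; subst e2; subst e3
          refine ⟨⟨(inC_one_iff hg hℓ).mpr h00.1, (inC_one_iff hg hℓ).mpr h00.2,
            hy, hm1, by push_cast; ring⟩, rfl⟩
      rw [himg, Finset.card_image_of_injective]
      intro m m' h
      simpa using h
    · rw [if_neg h00]
      rw [Finset.card_eq_zero]
      ext t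
      obtain ⟨u, w, m⟩ := t
      simp only [Q2p, Finset.filter_filter, Finset.mem_filter, Finset.mem_univ, true_and,
        Finset.notMem_empty, iff_false, not_and]
      rintro ⟨hiu, hjw, hy, hm1, hrel⟩ hu1
      have hu : u = 1 := Units.ext (by rw [Units.val_one]; exact hu1)
      have hw : w = 1 := by
        apply Units.ext
        have hm0 : (m : F) ≠ 0 := Units.ne_zero _
        have e1 : (m : F) * ((w : F) - 1) = 0 := by rw [← hrel, hu1]; ring
        have e2 := (mul_eq_zero.mp e1).resolve_left hm0
        have e3 := sub_eq_zero.mp e2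
        rw [Units.val_one]; exact e3
      exact h00 ⟨(inC_one_iff hg hℓ).mp (hu ▸ hiu), (inC_one_iff hg hℓ).mp (hw ▸ hjw)⟩
  rw [h1, ← h2, add_comm]
  exact hsplit

lemma mset_card (hg : ∀ x : Fˣ, x ∈ Subgroup.zpowers g)
    (hℓ : ℓ ∣ Fintype.card F - 1) :
    (Mset (F := F) ℓ).card + 1 = (Fintype.card F - 1) / ℓ := by
  classical
  have hP : (univ.filter (fun m : Fˣ => ∃ y : Fˣ, m = y ^ ℓ)).card
      = (Fintype.card F - 1) / ℓ := by
    have : (univ.filter (fun m : Fˣ => ∃ y : Fˣ, m = y ^ ℓ))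
        = univ.filter (inC g ℓ 0) := by
      ext m
      simp only [Finset.mem_filter, Finset.mem_univ, true_and, inC]
      constructor
      · rintro ⟨y, rfl⟩; exact ⟨y, by rw [_root_.zpow_zero, one_mul]⟩
      · rintro ⟨y, rfl⟩; exact ⟨y, by rw [_root_.zpow_zero, one_mul]⟩
    rw [this]
    exact card_filter_inC hg hℓ 0
  have hsplit := Finset.card_filter_add_card_filter_not
    (s := univ.filter (fun m : Fˣ => ∃ y : Fˣ, m = y ^ ℓ)) (p := fun m : Fˣ => m = 1)
  have hone : ((univ.filter (fun m : Fˣ => ∃ y : Fˣ, m = y ^ ℓ)).filter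
      (fun m : Fˣ => m = 1)).card = 1 := by
    have : (univ.filter (fun m : Fˣ => ∃ y : Fˣ, m = y ^ ℓ)).filter (fun m : Fˣ => m = 1)
        = {1} := by
      ext m
      simp only [Finset.mem_filter, Finset.mem_univ, true_and, Finset.mem_singleton]
      constructor
      · rintro ⟨-, h⟩; exact h
      · rintro rfl; exact ⟨⟨1, (one_pow ℓ).symm⟩, rfl⟩
    rw [this, Finset.card_singleton]
  have hM : Mset (F := F) ℓ = (univ.filter (fun m : Fˣ => ∃ y : Fˣ, m = y ^ ℓ)).filter
      (fun m : Fˣ => ¬ m = 1) := by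
    rw [Mset, Finset.filter_filter]
  rw [hM]
  rw [hone] at hsplit
  rw [hP] at hsplit
  rw [add_comm]
  exact hsplit

lemma step5 (i j : ℤ) : (Q2p g ℓ i j).card = (Rset g ℓ i j).card := by
  classical
  apply Finset.card_bij (i := fun (t : Fˣ × Fˣ × Fˣ) _ => (t.1, t.2.2 * t.2.1, t.2.2))
  · rintro ⟨u, w, m⟩ ht
    simp only [Q2p, Finset.mem_filter, Finset.mem_univ, true_and] at ht
    obtain ⟨hiu, hjw, hy, hm1, hrel⟩ := ht
    simp only [Rset, Finset.mem_filter, Finset.mem_univ, true_and]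
    refine ⟨hiu, (inC_mul_iff hy).mpr hjw, hy, hm1, ?_⟩
    push_cast
    linear_combination hrel
  · rintro ⟨u, w, m⟩ ht ⟨u', w', m'⟩ ht' h
    simp only [Prod.mk.injEq] at h
    obtain ⟨h1, h2, h3⟩ := h
    subst h1; subst h3
    have : w = w' := by
      exact mul_left_cancel h2
    rw [this]
  · rintro ⟨u, w, m⟩ ht
    simp only [Rset, Finset.mem_filter, Finset.mem_univ, true_and] at ht
    obtain ⟨hiu, hjw, ⟨y, hy⟩, hm1, hrel⟩ := ht
    refine ⟨(u, m⁻¹ * w, m), ?_, ?_⟩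
    · simp only [Q2p, Finset.mem_filter, Finset.mem_univ, true_and]
      have hinv : ∃ z : Fˣ, m⁻¹ = z ^ ℓ := ⟨y⁻¹, by rw [hy, inv_pow]⟩
      refine ⟨hiu, (inC_mul_iff hinv).mpr hjw, ⟨y, hy⟩, hm1, ?_⟩
      have hm0 : (m : F) ≠ 0 := Units.ne_zero m
      have key : (m : F) * (m : F)⁻¹ = 1 := mul_inv_cancel₀ hm0
      push_cast
      linear_combination hrel - (w : F) * key
    · simp [mul_inv_cancel_left]

end Main2

section Main3
open scoped Classical

variable {F : Type*} [Field F] [Fintype F] (g : Fˣ) (ℓ : ℕ)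

lemma N_scale (i j : ℤ) (c : Fˣ) (hc : ∃ y : Fˣ, c = y ^ ℓ) (d : F) :
    (Npairs g ℓ i j ((c : F) * d)).card = (Npairs g ℓ i j d).card := by
  classical
  symm
  apply Finset.card_bij (i := fun (p : Fˣ × Fˣ) _ => (c * p.1, c * p.2))
  · rintro ⟨u, w⟩ hp
    simp only [Npairs, Finset.mem_filter, Finset.mem_univ, true_and] at hp ⊢
    obtain ⟨hiu, hjw, hd⟩ := hp
    refine ⟨(inC_mul_iff hc).mpr hiu, (inC_mul_iff hc).mpr hjw, ?_⟩
    push_cast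
    linear_combination (c : F) * hd
  · rintro ⟨u, w⟩ hp ⟨u', w'⟩ hp' h
    simp only [Prod.mk.injEq] at h
    rw [Prod.mk.injEq]
    exact ⟨mul_left_cancel h.1, mul_left_cancel h.2⟩
  · rintro ⟨u, w⟩ hp
    simp only [Npairs, Finset.mem_filter, Finset.mem_univ, true_and] at hp
    obtain ⟨hiu, hjw, hd⟩ := hp
    have hcinv : ∃ y : Fˣ, c⁻¹ = y ^ ℓ := by
      obtain ⟨y, rfl⟩ := hc; exact ⟨y⁻¹, by rw [inv_pow]⟩
    refine ⟨(c⁻¹ * u, c⁻¹ * w), ?_, ?_⟩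
    · simp only [Npairs, Finset.mem_filter, Finset.mem_univ, true_and]
      refine ⟨(inC_mul_iff hcinv).mpr hiu, (inC_mul_iff hcinv).mpr hjw, ?_⟩
      have hc0 : (c : F) ≠ 0 := Units.ne_zero c
      have key : (c : F) * (c : F)⁻¹ = 1 := mul_inv_cancel₀ hc0
      push_cast
      linear_combination (c:F)⁻¹ * hd + d * key
    · simp [mul_inv_cancel_left]

lemma step7 (i j : ℤ) :
    (Rset g ℓ i j).card
      = ∑ m ∈ Mset (F := F) ℓ, (Npairs g ℓ i j (1 - (m : F))).card := by
  classical
  have hmap : ∀ t ∈ Rset g ℓ i j, t.2.2 ∈ Mset (F := F) ℓ := by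
    rintro ⟨u, w, m⟩ ht
    simp only [Rset, Finset.mem_filter, Finset.mem_univ, true_and] at ht
    simp only [Mset, Finset.mem_filter, Finset.mem_univ, true_and]
    exact ⟨ht.2.2.1, ht.2.2.2.1⟩
  rw [Finset.card_eq_sum_card_fiberwise hmap]
  refine Finset.sum_congr rfl fun m hm => ?_
  simp only [Mset, Finset.mem_filter, Finset.mem_univ, true_and] at hm
  apply Finset.card_bij (i := fun (t : Fˣ × Fˣ × Fˣ) _ => (t.1, t.2.1))
  · rintro ⟨u, w, m'⟩ ht
    simp only [Rset, Finset.mem_filter, Finset.mem_univ, true_and] at ht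
    obtain ⟨⟨hiu, hjw, -, -, hrel⟩, hm'⟩ := ht
    have hm2 : m' = m := hm'
    subst hm2
    simp only [Npairs, Finset.mem_filter, Finset.mem_univ, true_and]
    exact ⟨hiu, hjw, hrel⟩
  · rintro ⟨u, w, m1⟩ ht ⟨u', w', m2⟩ ht' h
    simp only [Rset, Finset.mem_filter, Finset.mem_univ, true_and] at ht ht'
    simp only [Prod.mk.injEq] at h
    obtain ⟨h1, h2⟩ := h
    subst h1; subst h2
    have e1 : m1 = m := ht.2
    have e2 : m2 = m := ht'.2
    rw [e1, e2]
  · rintro ⟨u, w⟩ hp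
    simp only [Npairs, Finset.mem_filter, Finset.mem_univ, true_and] at hp
    refine ⟨(u, w, m), ?_, rfl⟩
    simp only [Rset, Finset.mem_filter, Finset.mem_univ, true_and]
    exact ⟨⟨hp.1, hp.2.1, hm.1, hm.2, hp.2.2⟩, by trivial⟩

lemma mcount [NeZero ℓ] (hg : ∀ x : Fˣ, x ∈ Subgroup.zpowers g)
    (hℓ : ℓ ∣ Fintype.card F - 1) {lam : ℕ} (hds : IsDiffSet (Kset F ℓ) lam)
    (s : Fin ℓ) :
    ((Mset (F := F) ℓ).filter
      (fun m : Fˣ => idxF (ℓ := ℓ) hg (1 - (m : F)) = s)).card = lam := by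
  classical
  set z : F := ((g ^ ((s : ℕ) : ℤ) : Fˣ) : F) with hzdef
  have hz0 : z ≠ 0 := Units.ne_zero _
  have hcard := hds z hz0
  rw [Nat.card_eq_fintype_card, Fintype.card_subtype] at hcard
  rw [← hcard]
  apply Finset.card_bij (i := fun (m : Fˣ) _ =>
    ((z / (1 - (m : F)), (m : F) * (z / (1 - (m : F)))) : F × F))
  · intro m hm
    simp only [Mset, Finset.filter_filter, Finset.mem_filter, Finset.mem_univ, true_and] at hm
    obtain ⟨⟨⟨y, hy⟩, hm1⟩, hidx⟩ := hm
    have h1m : 1 - (m : F) ≠ 0 := by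
      intro h
      exact hm1 (Units.ext (by rw [Units.val_one]; linear_combination - h))
    obtain ⟨e, he⟩ := (idxF_eq_iff hg hℓ h1m).mp hidx
    have he' : 1 - (m : F) = z * ((e : F)) ^ ℓ := by rw [he, hzdef]; push_cast; ring
    have he0 : ((e : F)) ^ ℓ ≠ 0 := pow_ne_zero _ (Units.ne_zero e)
    simp only [Finset.mem_filter, Finset.mem_univ, true_and]
    refine ⟨⟨e⁻¹, ?_⟩, ⟨y * e⁻¹, ?_⟩, ?_⟩
    · push_cast
      rw [he']
      field_simp
      rw [one_div, inv_pow, mul_inv_cancel₀ he0]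
    · push_cast
      rw [he', hy]
      push_cast
      field_simp
      have he1 : (e : F) ^ ℓ * (e : F)⁻¹ ^ ℓ = 1 := by rw [inv_pow, mul_inv_cancel₀ he0]
      linear_combination (-(y : F) ^ ℓ) * he1
    · field_simp
  · intro m hm m' hm' h
    simp only [Mset, Finset.filter_filter, Finset.mem_filter, Finset.mem_univ, true_and] at hm hm'
    have h1m : 1 - (m : F) ≠ 0 := by
      intro hh
      exact hm.1.2 (Units.ext (by rw [Units.val_one]; linear_combination - hh))
    have h1m' : 1 - (m' : F) ≠ 0 := by
      intro hh
      exact hm'.1.2 (Units.ext (by rw [Units.val_one]; linear_combination - hh))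
    simp only [Prod.mk.injEq] at h
    obtain ⟨h1, h2⟩ := h
    have ha0 : z / (1 - (m : F)) ≠ 0 := div_ne_zero hz0 h1m
    apply Units.ext
    rw [← h1] at h2
    exact mul_right_cancel₀ ha0 h2
  · rintro ⟨p₁, p₂⟩ hp
    simp only [Finset.mem_filter, Finset.mem_univ, true_and] at hp
    obtain ⟨⟨y₁, hy₁⟩, ⟨y₂, hy₂⟩, hdiff⟩ := hp
    have hp₁0 : p₁ ≠ 0 := by rw [hy₁]; exact Units.ne_zero _
    have hp₂0 : p₂ ≠ 0 := by rw [hy₂]; exact Units.ne_zero _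
    refine ⟨(y₂ * y₁⁻¹) ^ ℓ, ?_, ?_⟩
    · have hval : (((y₂ * y₁⁻¹) ^ ℓ : Fˣ) : F) = p₂ / p₁ := by
        rw [hy₁, hy₂]
        push_cast
        field_simp
        rw [div_pow, div_mul_cancel₀ _ (pow_ne_zero _ (Units.ne_zero y₁))]
      have hne1 : ((y₂ * y₁⁻¹) ^ ℓ : Fˣ) ≠ 1 := by
        intro hh
        rw [hh, Units.val_one] at hval
        have : p₂ = p₁ := by
          field_simp at hval
          exact hval.symm
        rw [this] at hdiff
        simp at hdiff
        exact hz0 hdiff.symm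
      have h1mv : 1 - (((y₂ * y₁⁻¹) ^ ℓ : Fˣ) : F) = z / p₁ := by
        rw [hval]
        field_simp
        linear_combination hdiff
      have h1m0 : 1 - (((y₂ * y₁⁻¹) ^ ℓ : Fˣ) : F) ≠ 0 := by
        rw [h1mv]
        exact div_ne_zero hz0 hp₁0
      simp only [Mset, Finset.filter_filter, Finset.mem_filter, Finset.mem_univ, true_and]
      refine ⟨⟨⟨y₂ * y₁⁻¹, rfl⟩, hne1⟩, ?_⟩
      rw [idxF_eq_iff hg hℓ h1m0]
      refine ⟨y₁⁻¹, ?_⟩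
      rw [h1mv, hy₁, hzdef]
      push_cast
      field_simp
      rw [one_div, inv_pow, mul_inv_cancel₀ (pow_ne_zero _ (Units.ne_zero y₁))]
    · have hval : (((y₂ * y₁⁻¹) ^ ℓ : Fˣ) : F) = p₂ / p₁ := by
        rw [hy₁, hy₂]
        push_cast
        field_simp
        rw [div_pow, div_mul_cancel₀ _ (pow_ne_zero _ (Units.ne_zero y₁))]
      have h1mv : 1 - (((y₂ * y₁⁻¹) ^ ℓ : Fˣ) : F) = z / p₁ := by
        rw [hval]
        field_simp
        linear_combination hdiff
      rw [Prod.mk.injEq]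
      constructor
      · rw [h1mv]
        field_simp
      · rw [h1mv, hval]
        field_simp

end Main3

section Main4
open scoped Classical

variable {F : Type*} [Field F] [Fintype F] (g : Fˣ) (ℓ : ℕ)

lemma step8 [NeZero ℓ] (hg : ∀ x : Fˣ, x ∈ Subgroup.zpowers g)
    (hℓ : ℓ ∣ Fintype.card F - 1) {lam : ℕ} (hds : IsDiffSet (Kset F ℓ) lam) (i j : ℤ) :
    (Rset g ℓ i j).card
      = lam * ∑ s : Fin ℓ, (Npairs g ℓ i j ((g ^ ((s : ℕ) : ℤ) : Fˣ) : F)).card := by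
  classical
  rw [step7]
  rw [← Finset.sum_fiberwise_of_maps_to (t := (univ : Finset (Fin ℓ)))
    (g := fun m : Fˣ => idxF (ℓ := ℓ) hg (1 - (m : F)))
    (fun m _ => Finset.mem_univ _)
    (fun m => (Npairs g ℓ i j (1 - (m : F))).card)]
  rw [Finset.mul_sum]
  refine Finset.sum_congr rfl fun s _ => ?_
  have hconst : ∀ m ∈ (Mset (F := F) ℓ).filter
      (fun m : Fˣ => idxF (ℓ := ℓ) hg (1 - (m : F)) = s),
      (Npairs g ℓ i j (1 - (m : F))).card
        = (Npairs g ℓ i j ((g ^ ((s : ℕ) : ℤ) : Fˣ) : F)).card := by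
    intro m hm
    simp only [Mset, Finset.filter_filter, Finset.mem_filter, Finset.mem_univ, true_and] at hm
    obtain ⟨⟨hpow, hm1⟩, hidx⟩ := hm
    have h1m : 1 - (m : F) ≠ 0 := fun h =>
      hm1 (Units.ext (by rw [Units.val_one]; linear_combination - h))
    obtain ⟨e, he⟩ := (idxF_eq_iff hg hℓ h1m).mp hidx
    have he' : 1 - (m : F) = ((e ^ ℓ : Fˣ) : F) * ((g ^ ((s : ℕ) : ℤ) : Fˣ) : F) := by
      rw [he]; push_cast; ring
    rw [he', N_scale g ℓ i j (e ^ ℓ) ⟨e, rfl⟩]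
  rw [Finset.sum_congr rfl hconst, Finset.sum_const, smul_eq_mul,
    mcount g ℓ hg hℓ hds s]

lemma tsum_eq [NeZero ℓ] (hg : ∀ x : Fˣ, x ∈ Subgroup.zpowers g)
    (hℓ : ℓ ∣ Fintype.card F - 1) (hl2 : 2 ≤ ℓ) (i j : ℤ) :
    (∑ s : Fin ℓ, (Npairs g ℓ i j ((g ^ ((s : ℕ) : ℤ) : Fˣ) : F)).card)
      + (if (ℓ:ℤ) ∣ i - j then 1 else 0) = (Fintype.card F - 1) / ℓ := by
  classical
  set k := (Fintype.card F - 1) / ℓ with hkdef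
  have hq2 : 1 < Fintype.card F := Fintype.one_lt_card
  have hkpos : 0 < k := Nat.div_pos (Nat.le_of_dvd (by omega) hℓ) (by omega)
  -- total count of pairs
  have htot : (univ.filter (fun p : Fˣ × Fˣ => inC g ℓ i p.1 ∧ inC g ℓ j p.2)).card
      = k * k := by
    rw [← Finset.univ_product_univ, Finset.filter_product, Finset.card_product,
      card_filter_inC hg hℓ, card_filter_inC hg hℓ]
  -- diagonal part
  have hdiag : ((univ.filter (fun p : Fˣ × Fˣ => inC g ℓ i p.1 ∧ inC g ℓ j p.2)).filter
      (fun p => p.1 = p.2)).card = (if (ℓ:ℤ) ∣ i - j then k else 0) := by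
    have hbij : ((univ.filter (fun p : Fˣ × Fˣ => inC g ℓ i p.1 ∧ inC g ℓ j p.2)).filter
        (fun p => p.1 = p.2)).card
        = (univ.filter (fun u : Fˣ => inC g ℓ i u ∧ inC g ℓ j u)).card := by
      apply Finset.card_bij (i := fun (p : Fˣ × Fˣ) _ => p.1)
      · rintro ⟨u, w⟩ hp
        simp only [Finset.filter_filter, Finset.mem_filter, Finset.mem_univ, true_and] at hp
        obtain ⟨⟨h1, h2⟩, h3⟩ := hp
        have h3' : u = w := h3
        subst h3'
        simp only [Finset.mem_filter, Finset.mem_univ, true_and]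
        exact ⟨h1, h2⟩
      · rintro ⟨u, w⟩ hp ⟨u', w'⟩ hp' h
        simp only [Finset.filter_filter, Finset.mem_filter, Finset.mem_univ, true_and] at hp hp'
        have e1 : u = w := hp.2
        have e2 : u' = w' := hp'.2
        have h' : u = u' := h
        subst h'; subst e1; subst e2
        rfl
      · intro u hu
        simp only [Finset.mem_filter, Finset.mem_univ, true_and] at hu
        refine ⟨(u, u), ?_, rfl⟩
        simp only [Finset.filter_filter, Finset.mem_filter, Finset.mem_univ, true_and]
        exact ⟨⟨hu.1, hu.2⟩, by trivial⟩
    rw [hbij]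
    by_cases hij : (ℓ:ℤ) ∣ i - j
    · rw [if_pos hij]
      have hset : univ.filter (fun u : Fˣ => inC g ℓ i u ∧ inC g ℓ j u)
          = univ.filter (inC g ℓ i) := by
        ext u
        simp only [Finset.mem_filter, Finset.mem_univ, true_and]
        have := inC_congr g ℓ (dvd_sub_comm.mp hij) (u := u)
        tauto
      rw [hset, card_filter_inC hg hℓ]
    · rw [if_neg hij]
      rw [Finset.card_eq_zero]
      ext u
      simp only [Finset.mem_filter, Finset.mem_univ, true_and, Finset.notMem_empty, iff_false,
        not_and]
      intro h1 h2
      exact absurd (inC_dvd_of_both hg hℓ h1 h2) hij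
  -- off-diagonal part
  have hsplit := Finset.card_filter_add_card_filter_not
    (s := univ.filter (fun p : Fˣ × Fˣ => inC g ℓ i p.1 ∧ inC g ℓ j p.2))
    (p := fun p : Fˣ × Fˣ => p.1 = p.2)
  -- the off-diagonal count fiberwise
  have hoff : ((univ.filter (fun p : Fˣ × Fˣ => inC g ℓ i p.1 ∧ inC g ℓ j p.2)).filter
      (fun p => ¬ p.1 = p.2)).card
      = k * ∑ s : Fin ℓ, (Npairs g ℓ i j ((g ^ ((s : ℕ) : ℤ) : Fˣ) : F)).card := by
    have hmap : ∀ p ∈ (univ.filter (fun p : Fˣ × Fˣ => inC g ℓ i p.1 ∧ inC g ℓ j p.2)).filter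
        (fun p => ¬ p.1 = p.2),
        idxF (ℓ := ℓ) hg ((p.1 : F) - (p.2 : F)) ∈ (univ : Finset (Fin ℓ)) :=
      fun _ _ => Finset.mem_univ _
    rw [Finset.card_eq_sum_card_fiberwise hmap, Finset.mul_sum]
    refine Finset.sum_congr rfl fun s _ => ?_
    -- fiber over s equals sum over coset elements of Npairs
    have hmap2 : ∀ p ∈ ((univ.filter (fun p : Fˣ × Fˣ => inC g ℓ i p.1 ∧ inC g ℓ j p.2)).filter
        (fun p => ¬ p.1 = p.2)).filter
          (fun p => idxF (ℓ := ℓ) hg ((p.1 : F) - (p.2 : F)) = s),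
        ((p.1 : F) - (p.2 : F)) ∈ (univ : Finset F).filter (inCF g ℓ ((s : ℕ) : ℤ)) := by
      intro p hp
      simp only [Finset.filter_filter, Finset.mem_filter, Finset.mem_univ, true_and] at hp
      obtain ⟨⟨-, hne⟩, hidx⟩ := hp
      have hd0 : (p.1 : F) - (p.2 : F) ≠ 0 := by
        intro h
        exact hne (Units.ext (by linear_combination h))
      simp only [Finset.mem_filter, Finset.mem_univ, true_and]
      exact (idxF_eq_iff hg hℓ hd0).mp hidx
    rw [Finset.card_eq_sum_card_fiberwise hmap2]
    -- each inner fiber is Npairs d, and Npairs d = Npairs (g^s) on the coset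
    have hinner : ∀ d ∈ (univ : Finset F).filter (inCF g ℓ ((s : ℕ) : ℤ)),
        ((((univ.filter (fun p : Fˣ × Fˣ => inC g ℓ i p.1 ∧ inC g ℓ j p.2)).filter
          (fun p => ¬ p.1 = p.2)).filter
            (fun p => idxF (ℓ := ℓ) hg ((p.1 : F) - (p.2 : F)) = s)).filter
              (fun p => (p.1 : F) - (p.2 : F) = d)).card
        = (Npairs g ℓ i j ((g ^ ((s : ℕ) : ℤ) : Fˣ) : F)).card := by
      intro d hd
      simp only [Finset.mem_filter, Finset.mem_univ, true_and] at hd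
      have hd0 : d ≠ 0 := inCF_ne_zero hd
      have hfib : (((univ.filter (fun p : Fˣ × Fˣ => inC g ℓ i p.1 ∧ inC g ℓ j p.2)).filter
          (fun p => ¬ p.1 = p.2)).filter
            (fun p => idxF (ℓ := ℓ) hg ((p.1 : F) - (p.2 : F)) = s)).filter
              (fun p => (p.1 : F) - (p.2 : F) = d)
          = Npairs g ℓ i j d := by
        ext p
        simp only [Npairs, Finset.mem_filter, Finset.mem_univ, true_and]
        constructor
        · rintro ⟨⟨⟨⟨h1, h2⟩, h3⟩, h4⟩, h5⟩
          exact ⟨h1, h2, h5⟩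
        · rintro ⟨h1, h2, h3⟩
          have hne : ¬ p.1 = p.2 := by
            intro h
            apply hd0
            rw [← h3, h]
            ring
          have hidx : idxF (ℓ := ℓ) hg ((p.1 : F) - (p.2 : F)) = s := by
            rw [h3]
            exact (idxF_eq_iff hg hℓ hd0).mpr hd
          exact ⟨⟨⟨⟨h1, h2⟩, hne⟩, hidx⟩, h3⟩
      rw [hfib]
      obtain ⟨e, he⟩ := hd
      have he' : d = ((e ^ ℓ : Fˣ) : F) * ((g ^ ((s : ℕ) : ℤ) : Fˣ) : F) := by
        rw [he]; push_cast; ring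
      rw [he', N_scale g ℓ i j (e ^ ℓ) ⟨e, rfl⟩]
    rw [Finset.sum_congr rfl hinner, Finset.sum_const, smul_eq_mul,
      card_filter_inCF hg hℓ]
  -- put together : k * Tsum + (if .. then k else 0) = k * k
  rw [hdiag, hoff, htot] at hsplit
  by_cases hij : (ℓ:ℤ) ∣ i - j
  · rw [if_pos hij] at hsplit ⊢
    apply Nat.eq_of_mul_eq_mul_left hkpos
    rw [Nat.mul_add, Nat.mul_one]
    rw [Nat.add_comm] at hsplit
    exact hsplit
  · rw [if_neg hij] at hsplit ⊢
    apply Nat.eq_of_mul_eq_mul_left hkpos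
    rw [Nat.mul_add, Nat.mul_zero, Nat.add_zero]
    rw [Nat.add_comm, Nat.add_zero] at hsplit
    exact hsplit

end Main4

section Final
open scoped Classical

variable {F : Type*} [Field F] [Fintype F] (g : Fˣ) (ℓ : ℕ)

lemma main_count [NeZero ℓ] (hg : ∀ x : Fˣ, x ∈ Subgroup.zpowers g)
    (hℓ : ℓ ∣ Fintype.card F - 1) (hl2 : 2 ≤ ℓ) {lam : ℕ}
    (hds : IsDiffSet (Kset F ℓ) lam) (i j : ℤ) :
    (∑ s : Fin ℓ, cyc g ℓ ((s : ℕ) : ℤ) i * cyc g ℓ ((s : ℕ) : ℤ) j)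
      + lam * (if (ℓ:ℤ) ∣ i - j then 1 else 0)
      + ((Fintype.card F - 1) / ℓ) * (if (ℓ:ℤ) ∣ i ∧ (ℓ:ℤ) ∣ j then 1 else 0)
    = lam * ((Fintype.card F - 1) / ℓ)
      + ((Fintype.card F - 1) / ℓ) * (if (ℓ:ℤ) ∣ i - j then 1 else 0) := by
  classical
  have h1 := step1 g ℓ hg hℓ i j
  have h2 := step2 g ℓ i j
  have h3 := quad1_card g ℓ hg hℓ i j
  have h4 := quad2_card g ℓ hg hℓ i j
  have h5 := step5 g ℓ i j
  have h6 := step8 g ℓ hg hℓ hds i j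
  have h7 := tsum_eq g ℓ hg hℓ hl2 i j
  have h8 := mset_card g ℓ hg hℓ
  by_cases hij : (ℓ:ℤ) ∣ i - j
  · by_cases h00 : (ℓ:ℤ) ∣ i ∧ (ℓ:ℤ) ∣ j
    · simp only [if_pos hij, if_pos h00, mul_one] at h3 h4 h7 ⊢
      have e : lam * ((Fintype.card F - 1) / ℓ)
          = lam * (∑ s : Fin ℓ, (Npairs g ℓ i j ((g ^ ((s : ℕ) : ℤ) : Fˣ) : F)).card)
            + lam := by
        rw [← h7]; ring
      linarith [h1, h2, h3, h4, h5, h6, e, h8]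
    · simp only [if_pos hij, if_neg h00, mul_one, mul_zero, add_zero] at h3 h4 h7 ⊢
      have e : lam * ((Fintype.card F - 1) / ℓ)
          = lam * (∑ s : Fin ℓ, (Npairs g ℓ i j ((g ^ ((s : ℕ) : ℤ) : Fˣ) : F)).card)
            + lam := by
        rw [← h7]; ring
      linarith [h1, h2, h3, h4, h5, h6, e]
  · have h00 : ¬ ((ℓ:ℤ) ∣ i ∧ (ℓ:ℤ) ∣ j) := by
      rintro ⟨ha, hb⟩; exact hij (dvd_sub ha hb)
    simp only [if_neg hij, if_neg h00, mul_zero, add_zero] at h3 h4 h7 ⊢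
    have e : lam * ((Fintype.card F - 1) / ℓ)
        = lam * (∑ s : Fin ℓ, (Npairs g ℓ i j ((g ^ ((s : ℕ) : ℤ) : Fˣ) : F)).card) := by
      rw [← h7]
    linarith [h1, h2, h3, h4, h5, h6, e]

lemma fin_dvd_sub_iff [NeZero ℓ] (i j : Fin ℓ) :
    (ℓ:ℤ) ∣ ((i : ℕ) : ℤ) - ((j : ℕ) : ℤ) ↔ i = j := by
  constructor
  · intro h
    have hi := i.isLt; have hj := j.isLt
    have h0 : ((i : ℕ) : ℤ) - ((j : ℕ) : ℤ) = 0 := by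
      refine Int.eq_zero_of_abs_lt_dvd h ?_
      rw [abs_lt]; omega
    ext; omega
  · rintro rfl; simp

lemma fin_dvd_iff [NeZero ℓ] (i : Fin ℓ) :
    (ℓ:ℤ) ∣ ((i : ℕ) : ℤ) ↔ i = 0 := by
  have h := fin_dvd_sub_iff ℓ i 0
  simpa using h

end Final


theorem cycMatrix_gram_of_diffSet {F : Type*} [Field F] [Fintype F] (g : Fˣ) (ℓ : ℕ)
    [NeZero ℓ] (hℓ2 : 2 ≤ ℓ) (hg : ∀ x : Fˣ, x ∈ Subgroup.zpowers g)
    (hodd : Odd (Fintype.card F)) (hℓ : ℓ ∣ Fintype.card F - 1)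
    (k : ℕ) (hk : k = (Fintype.card F - 1) / ℓ)
    (lam : ℕ) (hlam : lam = (k - 1) / ℓ)
    (hds : IsDiffSet (Kset F ℓ) lam)
    (A : Matrix (Fin ℓ) (Fin ℓ) ℤ) (hA : A = cycMatrix g ℓ) :
    Aᵀ * A = (lam * k : ℤ) • Matrix.of (fun _ _ => (1 : ℤ)) +
      ((k : ℤ) - lam) • (1 : Matrix (Fin ℓ) (Fin ℓ) ℤ) -
      (k : ℤ) • Matrix.single 0 0 1 := by
  classical
  subst hA
  subst hk
  ext i j
  rw [Matrix.mul_apply]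
  simp only [Matrix.transpose_apply, cycMatrix, Matrix.of_apply, Matrix.add_apply,
    Matrix.sub_apply, Matrix.smul_apply, Matrix.one_apply, smul_eq_mul, mul_one,
    Matrix.single]
  have hmain := main_count g ℓ hg hℓ hℓ2 hds ((i : ℕ) : ℤ) ((j : ℕ) : ℤ)
  set K : ℕ := (Fintype.card F - 1) / ℓ with hKdef
  have hij := fin_dvd_sub_iff ℓ i j
  have hi0 := fin_dvd_iff ℓ i
  have hj0 := fin_dvd_iff ℓ j
  by_cases hc : i = j
  · subst hc
    by_cases hc0 : i = 0
    · subst hc0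
      rw [if_pos (hij.mpr rfl), if_pos ⟨hi0.mpr rfl, hj0.mpr rfl⟩] at hmain
      rw [if_pos rfl, if_pos ⟨rfl, rfl⟩]
      have hz := congrArg (Nat.cast (R := ℤ)) hmain
      push_cast at hz
      linarith [hz]
    · have h00 : ¬ ((ℓ:ℤ) ∣ ((i : ℕ) : ℤ) ∧ (ℓ:ℤ) ∣ ((i : ℕ) : ℤ)) := by
        rintro ⟨h, -⟩; exact hc0 (hi0.mp h)
      rw [if_pos (hij.mpr rfl), if_neg h00] at hmain
      rw [if_pos rfl, if_neg (by rintro ⟨h, -⟩; exact hc0 h.symm)]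
      have hz := congrArg (Nat.cast (R := ℤ)) hmain
      push_cast at hz
      linarith [hz]
  · have hijd : ¬ (ℓ:ℤ) ∣ ((i : ℕ) : ℤ) - ((j : ℕ) : ℤ) := fun h => hc (hij.mp h)
    have h00 : ¬ ((ℓ:ℤ) ∣ ((i : ℕ) : ℤ) ∧ (ℓ:ℤ) ∣ ((j : ℕ) : ℤ)) := by
      rintro ⟨ha, hb⟩
      exact hc (by rw [hi0.mp ha, hj0.mp hb])
    rw [if_neg hijd, if_neg h00] at hmain
    rw [if_neg hc, if_neg (by rintro ⟨ha, hb⟩; exact hc (by rw [← ha, ← hb]))]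
    have hz := congrArg (Nat.cast (R := ℤ)) hmain
    push_cast at hz
    linarith [hz]
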